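/- Let A₁,…,Aₙ be actions with costs t_i ≥ 0 and probabilities p_i ∈ [0,1) satisfying t₁/(1−p₁) ≤ … ≤ tₙ/(1−pₙ). Define for a permutation σ the AND-group expected cost T_G(σ) = Σ_{i=1}^n t_{σ(i)} ∏_{j<i} p_{σ(j)}. Then T_G(id) ≤ T_G(σ) for every permutation σ. -/

import Mathlib

open Finset

private def costP {n : ℕ} (t p : Fin n → ℝ) (σ : Equiv.Perm (Fin n)) : ℝ :=
  ∑ i : Fin n, t (σ i) * ∏ j ∈ Finset.Iio i, p (σ j)

private def wtP {n : ℕ} (σ : Equiv.Perm (Fin n)) : ℕ :=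
  ∑ i : Fin n, (n + 1) ^ (n - (i : ℕ)) * (σ i : ℕ)

private lemma pair_split {n : ℕ} {M : Type*} [AddCommMonoid M] (k k' : Fin n) (hkk' : k ≠ k')
    (f : Fin n → M) :
    ∑ i : Fin n, f i = (∑ i ∈ Finset.univ \ {k, k'}, f i) + (f k + f k') := by
  rw [← Finset.sum_sdiff (Finset.subset_univ {k, k'}), Finset.sum_pair hkk']

private lemma perm_id_of_sorted {n : ℕ} (σ : Equiv.Perm (Fin n))
    (h : ∀ k : Fin n, ∀ hk : (k : ℕ) + 1 < n, σ k ≤ σ ⟨(k : ℕ) + 1, hk⟩) : σ = 1 := by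
  match n with
  | 0 => ext i; exact absurd i.2 (Nat.not_lt_zero _)
  | m + 1 =>
    have hm : StrictMono σ := by
      rw [Fin.strictMono_iff_lt_succ]
      intro i
      have h1 : ((i.castSucc : Fin (m+1)) : ℕ) + 1 < m + 1 := by
        have := i.2; simp only [Fin.coe_castSucc]; omega
      have h2 : (⟨((i.castSucc : Fin (m+1)) : ℕ) + 1, h1⟩ : Fin (m+1)) = i.succ := by
        ext; simp
      have := h i.castSucc h1
      rw [h2] at this
      refine lt_of_le_of_ne this ?_
      intro hc
      have : (i.castSucc : Fin (m+1)) = i.succ := σ.injective hc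
      have := congrArg Fin.val this
      simp at this
    have hid : StrictMono (id : Fin (m+1) → Fin (m+1)) := strictMono_id
    have hr : Set.range σ = Set.range (id : Fin (m+1) → Fin (m+1)) := by
      simp [Set.range_id, σ.surjective.range_eq]
    haveI : WellFoundedLT (Fin (m+1)) := Finite.to_wellFoundedLT
    have := (hm.range_inj hid).1 hr
    ext i
    exact congrArg Fin.val (congrFun this i)

private lemma swap_step {n : ℕ} (t p : Fin n → ℝ) (ht : ∀ i, 0 ≤ t i)
    (hp : ∀ i, 0 ≤ p i ∧ p i < 1)
    (σ : Equiv.Perm (Fin n)) (k : Fin n) (hk : (k : ℕ) + 1 < n)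
    (hr : t (σ ⟨(k : ℕ) + 1, hk⟩) / (1 - p (σ ⟨(k : ℕ) + 1, hk⟩))
        ≤ t (σ k) / (1 - p (σ k))) :
    costP t p (σ * Equiv.swap k ⟨(k : ℕ) + 1, hk⟩) ≤ costP t p σ := by
  set k' : Fin n := ⟨(k : ℕ) + 1, hk⟩ with hk'def
  have hkk' : k ≠ k' := by
    intro h; have := congrArg Fin.val h; simp [hk'def] at this
  have hklt : k < k' := by
    rw [Fin.lt_iff_val_lt_val]; simp [hk'def]
  set s := Equiv.swap k k' with hs
  set τ := σ * s with hτ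
  have hτapp : ∀ i, τ i = σ (s i) := fun i => rfl
  have hsk : s k = k' := Equiv.swap_apply_left k k'
  have hsk' : s k' = k := Equiv.swap_apply_right k k'
  have hsj : ∀ j : Fin n, j ≠ k → j ≠ k' → s j = j := fun j h1 h2 =>
    Equiv.swap_apply_of_ne_of_ne h1 h2
  -- terms away from k, k' agree
  have hmain : ∀ i ∈ Finset.univ \ {k, k'},
      t (τ i) * ∏ j ∈ Finset.Iio i, p (τ j) = t (σ i) * ∏ j ∈ Finset.Iio i, p (σ j) := by
    intro i hi
    simp only [Finset.mem_sdiff, Finset.mem_insert, Finset.mem_singleton] at hi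
    have hik : i ≠ k := fun h => hi.2 (Or.inl h)
    have hik' : i ≠ k' := fun h => hi.2 (Or.inr h)
    have hτi : τ i = σ i := by rw [hτapp, hsj i hik hik']
    rw [hτi]
    congr 1
    rcases lt_or_gt_of_ne hik with hlt | hgt
    · refine Finset.prod_congr rfl fun j hj => ?_
      rw [Finset.mem_Iio] at hj
      have hjk : j ≠ k := ne_of_lt (hj.trans hlt)
      have hjk' : j ≠ k' := ne_of_lt ((hj.trans hlt).trans hklt)
      rw [hτapp, hsj j hjk hjk']
    · -- i > k; since i ≠ k', i > k'
      have hgt' : k' < i := by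
        rcases lt_or_ge k' i with h | h
        · exact h
        · exfalso
          have h1 : (i : ℕ) ≤ (k : ℕ) + 1 := h
          have h2 : (k : ℕ) < (i : ℕ) := hgt
          have : (i : ℕ) = (k : ℕ) + 1 := by omega
          exact hik' (Fin.ext this)
      have hsupp : {a | s a ≠ a} ⊆ (Finset.Iio i : Finset (Fin n)) := by
        intro a ha
        simp only [Set.mem_setOf_eq] at ha
        have : a = k ∨ a = k' := by
          by_contra hc
          push_neg at hc
          exact ha (hsj a hc.1 hc.2)
        rcases this with h | h <;> subst h <;> simp [Finset.mem_Iio]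
        · exact hklt.trans hgt'
        · exact hgt'
      calc ∏ j ∈ Finset.Iio i, p (τ j) = ∏ j ∈ Finset.Iio i, (fun x => p (σ x)) (s j) := rfl
        _ = ∏ j ∈ Finset.Iio i, p (σ j) := s.prod_comp (Finset.Iio i) (fun x => p (σ x)) hsupp
  -- split both sums
  rw [costP, costP, pair_split k k' hkk', pair_split k k' hkk',
    Finset.sum_congr rfl hmain]
  refine add_le_add (le_refl _) ?_
  -- compute the four terms
  have hIiok' : Finset.Iio k' = insert k (Finset.Iio k) := by
    ext j
    simp only [Finset.mem_Iio, Finset.mem_insert]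
    rw [Fin.lt_iff_val_lt_val, Fin.lt_iff_val_lt_val]
    constructor
    · intro h
      have : (j : ℕ) < (k : ℕ) + 1 := h
      rcases Nat.lt_succ_iff_lt_or_eq.mp this with h | h
      · exact Or.inr h
      · exact Or.inl (Fin.ext h)
    · intro h
      rcases h with h | h
      · subst h; exact Nat.lt_succ_self _
      · exact h.trans (Nat.lt_succ_self _)
  have hknot : k ∉ Finset.Iio k := by simp
  have hPk : ∀ j ∈ Finset.Iio k, p (τ j) = p (σ j) := by
    intro j hj
    rw [Finset.mem_Iio] at hj
    rw [hτapp, hsj j (ne_of_lt hj) (ne_of_lt (hj.trans hklt))]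
  set P : ℝ := ∏ j ∈ Finset.Iio k, p (σ j) with hP
  have hPτ : ∏ j ∈ Finset.Iio k, p (τ j) = P := Finset.prod_congr rfl hPk
  have hτk : τ k = σ k' := by rw [hτapp, hsk]
  have hτk' : τ k' = σ k := by rw [hτapp, hsk']
  have hprodτ : ∏ j ∈ Finset.Iio k', p (τ j) = p (σ k') * P := by
    rw [hIiok', Finset.prod_insert hknot, hτk, hPτ]
  have hprodσ : ∏ j ∈ Finset.Iio k', p (σ j) = p (σ k) * P := by
    rw [hIiok', Finset.prod_insert hknot]
  rw [hτk, hτk', hPτ, hprodτ, hprodσ]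
  -- the core inequality
  set a := σ k
  set b := σ k'
  have h1a : (0:ℝ) < 1 - p a := by have := (hp a).2; linarith
  have h1b : (0:ℝ) < 1 - p b := by have := (hp b).2; linarith
  have key : t b * (1 - p a) ≤ t a * (1 - p b) := by
    rw [div_le_div_iff₀ h1b h1a] at hr
    linarith
  have hPnn : 0 ≤ P := Finset.prod_nonneg fun j _ => (hp _).1
  nlinarith [mul_nonneg hPnn (sub_nonneg.2 key)]

private lemma wt_swap_lt {n : ℕ} (σ : Equiv.Perm (Fin n)) (k : Fin n) (hk : (k : ℕ) + 1 < n)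
    (hlt : σ ⟨(k : ℕ) + 1, hk⟩ < σ k) :
    wtP (σ * Equiv.swap k ⟨(k : ℕ) + 1, hk⟩) < wtP σ := by
  set k' : Fin n := ⟨(k : ℕ) + 1, hk⟩ with hk'def
  have hkk' : k ≠ k' := by
    intro h; have := congrArg Fin.val h; simp [hk'def] at this
  set s := Equiv.swap k k' with hs
  set τ := σ * s with hτ
  have hτapp : ∀ i, τ i = σ (s i) := fun i => rfl
  have hmain : ∀ i ∈ Finset.univ \ {k, k'},
      (n + 1) ^ (n - (i : ℕ)) * ((τ i : ℕ)) = (n + 1) ^ (n - (i : ℕ)) * ((σ i : ℕ)) := by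
    intro i hi
    simp only [Finset.mem_sdiff, Finset.mem_insert, Finset.mem_singleton] at hi
    have h1 : i ≠ k := fun h => hi.2 (Or.inl h)
    have h2 : i ≠ k' := fun h => hi.2 (Or.inr h)
    rw [hτapp, Equiv.swap_apply_of_ne_of_ne h1 h2]
  rw [wtP, wtP, pair_split k k' hkk', pair_split k k' hkk',
    Finset.sum_congr rfl hmain]
  refine Nat.add_lt_add_left ?_ _
  have hτk : τ k = σ k' := by rw [hτapp]; exact congrArg σ (Equiv.swap_apply_left k k')
  have hτk' : τ k' = σ k := by rw [hτapp]; exact congrArg σ (Equiv.swap_apply_right k k')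
  rw [hτk, hτk']
  have hkval : (k' : ℕ) = (k : ℕ) + 1 := rfl
  set A := (σ k : ℕ)
  set B := (σ k' : ℕ)
  have hBA : B < A := hlt
  have he : n - (k : ℕ) = (n - ((k : ℕ) + 1)) + 1 := by omega
  rw [hkval, he, pow_succ]
  set E := (n + 1) ^ (n - ((k : ℕ) + 1))
  have hE : 0 < E := Nat.pow_pos (Nat.succ_pos n)
  -- goal: E * (n+1) * B + E * A < E * (n+1) * A + E * B
  have hn2 : 0 < n := by omega
  have hnb : n * B < n * A := mul_lt_mul_of_pos_left hBA hn2
  calc E * (n + 1) * B + E * A = E * ((n + 1) * B + A) := by ring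
    _ < E * ((n + 1) * A + B) := by
        apply mul_lt_mul_of_pos_left ?_ hE
        nlinarith [hnb, hBA]
    _ = E * (n + 1) * A + E * B := by ring

theorem stmt_7 (n : ℕ) (t p : Fin n → ℝ)
    (ht : ∀ i, 0 ≤ t i)
    (hp : ∀ i, 0 ≤ p i ∧ p i < 1)
    (hsort : ∀ i j : Fin n, i ≤ j → t i / (1 - p i) ≤ t j / (1 - p j)) :
    ∀ σ : Equiv.Perm (Fin n),
      (∑ i : Fin n, t i * ∏ j ∈ Finset.Iio i, p j) ≤
        ∑ i : Fin n, t (σ i) * ∏ j ∈ Finset.Iio i, p (σ j) := by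
  intro σ
  suffices h : ∀ m : ℕ, ∀ τ : Equiv.Perm (Fin n), wtP τ = m →
      costP t p 1 ≤ costP t p τ by
    have := h (wtP σ) σ rfl
    simpa [costP, Equiv.Perm.one_apply] using this
  intro m
  induction m using Nat.strong_induction_on with
  | _ m ih =>
    intro τ hτ
    by_cases hmono : ∀ k : Fin n, ∀ hk : (k : ℕ) + 1 < n, τ k ≤ τ ⟨(k : ℕ) + 1, hk⟩
    · rw [perm_id_of_sorted τ hmono]
    · push_neg at hmono
      obtain ⟨k, hk, hlt⟩ := hmono
      have h1 : costP t p (τ * Equiv.swap k ⟨(k : ℕ) + 1, hk⟩) ≤ costP t p τ :=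
        swap_step t p ht hp τ k hk (hsort _ _ hlt.le)
      have h2 : wtP (τ * Equiv.swap k ⟨(k : ℕ) + 1, hk⟩) < wtP τ :=
        wt_swap_lt τ k hk hlt
      exact le_trans (ih _ (hτ ▸ h2) _ rfl) h1
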